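/- Pinched operator inequality used in the achievability proof: Let ρ_{AE} be a positive definite density operator on ℂ^{dA}⊗ℂ^{dE}, let ρ_E = Tr_A[ρ_{AE}] (which is then positive definite), let ν be the number of distinct eigenvalues of ρ_E, let c > 0, and let Π be the orthogonal projection onto the span of eigenvectors of c(1_A⊗ρ_E) − P_{ρ_E}[ρ_{AE}] with nonnegative eigenvalues. Then Π (1_A⊗ρ_E)^{−1} Π ≤ c·ν·(ρ_{AE})^{−1} in the Loewner order. -/

import Mathlib

open scoped Kronecker ComplexOrder
open MeasureTheory Matrix

noncomputable section

namespace QD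

/-! ### Haar measure on the unitary group -/

variable {n : Type*} [Fintype n] [DecidableEq n]

theorem isClosed_unitaryGroup :
    IsClosed ((Matrix.unitaryGroup n ℂ : Set (Matrix n n ℂ))) := by
  have h1 : Continuous fun A : Matrix n n ℂ => star A * A :=
    Continuous.matrix_mul continuous_star continuous_id
  have h2 : Continuous fun A : Matrix n n ℂ => A * star A :=
    Continuous.matrix_mul continuous_id continuous_star
  have heq : (Matrix.unitaryGroup n ℂ : Set (Matrix n n ℂ)) =
      {A | star A * A = 1} ∩ {A | A * star A = 1} := by
    ext A; exact Iff.rfl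
  rw [heq]
  exact (isClosed_eq h1 continuous_const).inter (isClosed_eq h2 continuous_const)

theorem isCompact_unitaryGroup :
    IsCompact ((Matrix.unitaryGroup n ℂ : Set (Matrix n n ℂ))) := by
  have hK : IsCompact {A : Matrix n n ℂ | ∀ i j, A i j ∈ Metric.closedBall (0 : ℂ) 1} := by
    have heq : {A : Matrix n n ℂ | ∀ i j, A i j ∈ Metric.closedBall (0 : ℂ) 1} =
        Set.pi Set.univ fun _ : n => Set.pi Set.univ fun _ : n => Metric.closedBall (0 : ℂ) 1 := by
      refine Set.eq_of_subset_of_subset ?_ ?_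
      · intro A hA
        exact Set.mem_univ_pi.mpr fun i => Set.mem_univ_pi.mpr fun j => hA i j
      · intro A hA i j
        exact Set.mem_univ_pi.mp (Set.mem_univ_pi.mp hA i) j
    rw [heq]
    exact isCompact_univ_pi fun _ => isCompact_univ_pi fun _ => isCompact_closedBall _ _
  refine IsCompact.of_isClosed_subset hK isClosed_unitaryGroup ?_
  intro A hA i j
  simpa [Metric.mem_closedBall, dist_eq_norm] using entry_norm_bound_of_unitary hA i j

instance : CompactSpace (Matrix.unitaryGroup n ℂ) :=
  isCompact_iff_compactSpace.mp isCompact_unitaryGroup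

instance : IsTopologicalGroup (Matrix.unitaryGroup n ℂ) where
  continuous_mul := by
    apply Continuous.subtype_mk
    exact ((continuous_subtype_val.comp continuous_fst).matrix_mul
      (continuous_subtype_val.comp continuous_snd))
  continuous_inv :=
    Continuous.subtype_mk (continuous_star.comp continuous_subtype_val) _

instance : MeasurableSpace (Matrix.unitaryGroup n ℂ) := borel _

instance : BorelSpace (Matrix.unitaryGroup n ℂ) := ⟨rfl⟩

/-- The normalized Haar (probability) measure on the unitary group of `ℂ^n`. -/
def haarU (n : Type*) [Fintype n] [DecidableEq n] : Measure (Matrix.unitaryGroup n ℂ) :=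
  Measure.haarMeasure (⊤ : TopologicalSpace.PositiveCompacts (Matrix.unitaryGroup n ℂ))

/-- Entrywise (Bochner) integral of a matrix-valued function. -/
def matIntegral {G : Type*} [MeasurableSpace G] (μ : Measure G) {m l : Type*}
    (f : G → Matrix m l ℂ) : Matrix m l ℂ :=
  Matrix.of fun i j => ∫ g, f g i j ∂μ

/-! ### Basic matrix-analytic quantities -/

/-- Trace norm `‖X‖₁ = Tr √(XᴴX)`. -/
def traceNorm (X : Matrix n n ℂ) : ℝ :=
  (((Matrix.posSemidef_conjTranspose_mul_self X).1.eigenvectorUnitary : Matrix n n ℂ) *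
    Matrix.diagonal (((↑) : ℝ → ℂ) ∘ (Real.sqrt ·) ∘ (Matrix.posSemidef_conjTranspose_mul_self X).1.eigenvalues) *
    (star (Matrix.posSemidef_conjTranspose_mul_self X).1.eigenvectorUnitary : Matrix n n ℂ)).trace.re

/-- Hilbert–Schmidt (Schatten-2) norm `‖X‖₂ = √(Tr[XᴴX])`. -/
def hsNorm (X : Matrix n n ℂ) : ℝ :=
  Real.sqrt ((Xᴴ * X).trace.re)

/-- A density operator: positive semidefinite with unit trace. -/
def IsDensity (ρ : Matrix n n ℂ) : Prop := ρ.PosSemidef ∧ ρ.trace = 1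

/-- Eigenvalues of a matrix (junk value `0` off the Hermitian matrices). -/
def eigvals (H : Matrix n n ℂ) : n → ℝ :=
  if h : H.IsHermitian then h.eigenvalues else 0

/-- Number of distinct eigenvalues `|spec(H)|`. -/
def specCount (H : Matrix n n ℂ) : ℕ := (Finset.univ.image (eigvals H)).card

/-- Spectral projection of a Hermitian matrix onto the eigenspace of `μ`
(junk value `0` off the Hermitian matrices). -/
def eigProj (H : Matrix n n ℂ) (μ : ℝ) : Matrix n n ℂ :=
  if h : H.IsHermitian then
    (h.eigenvectorUnitary : Matrix n n ℂ) *
      Matrix.diagonal (fun i => if h.eigenvalues i = μ then (1 : ℂ) else 0) *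
      (h.eigenvectorUnitary : Matrix n n ℂ)ᴴ
  else 0

/-- The pinching map `P_H[L] = ∑_i e_i L e_i`, the sum running over the spectral
projections `e_i` onto the distinct eigenvalues of `H`. -/
def pinch (H L : Matrix n n ℂ) : Matrix n n ℂ :=
  ∑ μ ∈ Finset.univ.image (eigvals H), eigProj H μ * L * eigProj H μ

/-- The projection `{X ≤ Y}` onto the span of eigenvectors of `Y - X` with nonnegative
eigenvalues. -/
def projLE (X Y : Matrix n n ℂ) : Matrix n n ℂ :=
  if h : (Y - X).IsHermitian then
    (h.eigenvectorUnitary : Matrix n n ℂ) *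
      Matrix.diagonal (fun i => if 0 ≤ h.eigenvalues i then (1 : ℂ) else 0) *
      (h.eigenvectorUnitary : Matrix n n ℂ)ᴴ
  else 0

/-- The projection onto the span of eigenvectors of `H` with positive eigenvalues. -/
def projPos (H : Matrix n n ℂ) : Matrix n n ℂ :=
  if h : H.IsHermitian then
    (h.eigenvectorUnitary : Matrix n n ℂ) *
      Matrix.diagonal (fun i => if 0 < h.eigenvalues i then (1 : ℂ) else 0) *
      (h.eigenvectorUnitary : Matrix n n ℂ)ᴴ
  else 0

/-- Real power of a Hermitian matrix through the spectral decomposition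
(junk value `0` off the Hermitian matrices). -/
def rpow (H : Matrix n n ℂ) (r : ℝ) : Matrix n n ℂ :=
  if h : H.IsHermitian then
    (h.eigenvectorUnitary : Matrix n n ℂ) *
      Matrix.diagonal (fun i => ((h.eigenvalues i ^ r : ℝ) : ℂ)) *
      (h.eigenvectorUnitary : Matrix n n ℂ)ᴴ
  else 0

/-- Matrix logarithm of a Hermitian (positive definite) matrix through the spectral
decomposition (junk value `0` off the Hermitian matrices). -/
def matLog (H : Matrix n n ℂ) : Matrix n n ℂ :=
  if h : H.IsHermitian then
    (h.eigenvectorUnitary : Matrix n n ℂ) *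
      Matrix.diagonal (fun i => ((Real.log (h.eigenvalues i) : ℝ) : ℂ)) *
      (h.eigenvectorUnitary : Matrix n n ℂ)ᴴ
  else 0

/-! ### Divergences -/

/-- `ε`-information-spectrum divergence
`D_s^ε(ρ‖σ) = sup {log c : c > 0, Tr[ρ {ρ ≤ cσ}] ≤ ε}`. -/
def Ds (ε : ℝ) (ρ σ : Matrix n n ℂ) : ℝ :=
  sSup {x : ℝ | ∃ c : ℝ, 0 < c ∧ (ρ * projLE ρ ((c : ℂ) • σ)).trace.re ≤ ε ∧ x = Real.log c}

/-- `ε`-hypothesis-testing divergence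
`D_h^ε(ρ‖σ) = sup {-log Tr[σT] : 0 ≤ T ≤ 1, Tr[ρT] ≥ 1 - ε}`. -/
def Dh (ε : ℝ) (ρ σ : Matrix n n ℂ) : ℝ :=
  sSup {x : ℝ | ∃ T : Matrix n n ℂ, T.PosSemidef ∧ (1 - T).PosSemidef ∧
    1 - ε ≤ (ρ * T).trace.re ∧ x = -Real.log ((σ * T).trace.re)}

/-- `exp D₂*(ρ‖σ) = Tr[(σ^{-1/4} ρ σ^{-1/4})²]`, the exponential of the collision
divergence. -/
def expD2 (ρ σ : Matrix n n ℂ) : ℝ :=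
  ((rpow σ (-(1/4 : ℝ)) * ρ * rpow σ (-(1/4 : ℝ))) ^ 2).trace.re

/-- Quantum relative entropy `D(ρ‖σ) = Tr[ρ(log ρ - log σ)]`. -/
def relEntropy (ρ σ : Matrix n n ℂ) : ℝ :=
  (ρ * (matLog ρ - matLog σ)).trace.re

/-- Quantum relative entropy variance `V(ρ‖σ) = Tr[ρ(log ρ - log σ)²] - D(ρ‖σ)²`. -/
def relVar (ρ σ : Matrix n n ℂ) : ℝ :=
  ((ρ * (matLog ρ - matLog σ) ^ 2).trace.re) - (relEntropy ρ σ) ^ 2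

/-! ### Bipartite notions; the first factor is the `A` system -/

variable {a b e : Type*}

/-- Partial trace over the first tensor factor. -/
def ptraceFst [Fintype a] (X : Matrix (a × b) (a × b) ℂ) : Matrix b b ℂ :=
  Matrix.of fun i j => ∑ x, X (x, i) (x, j)

/-- Partial trace over the `A₁` factor of a tripartite `(A₁ ⊗ C) ⊗ E` system. -/
def ptraceA1 [Fintype a] (X : Matrix ((a × b) × e) ((a × b) × e) ℂ) :
    Matrix (b × e) (b × e) ℂ :=
  Matrix.of fun p q => ∑ x, X ((x, p.1), p.2) ((x, q.1), q.2)

/-- Pinching of a bipartite operator with respect to a state on the second factor: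
`P_{σ} = id ⊗ (pinching w.r.t. σ)`. -/
def pinchSnd [Fintype a] [DecidableEq a] [Fintype b] [DecidableEq b]
    (σ : Matrix b b ℂ) (L : Matrix (a × b) (a × b) ℂ) : Matrix (a × b) (a × b) ℂ :=
  ∑ μ ∈ Finset.univ.image (eigvals σ),
    ((1 : Matrix a a ℂ) ⊗ₖ eigProj σ μ) * L * ((1 : Matrix a a ℂ) ⊗ₖ eigProj σ μ)

/-- Conditional `ε`-hypothesis-testing entropy `H_h^ε(A|B)_ρ = -D_h^ε(ρ_{AB} ‖ 1_A ⊗ ρ_B)`. -/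
def Hh [Fintype a] [DecidableEq a] [Fintype b] [DecidableEq b] (ε : ℝ)
    (ρ : Matrix (a × b) (a × b) ℂ) : ℝ :=
  -(Dh ε ρ ((1 : Matrix a a ℂ) ⊗ₖ ptraceFst ρ))

/-- Conditional entropy `H(A|B)_ρ = -Tr[ρ (log ρ - log (1_A ⊗ ρ_B))]`. -/
def condEntropy [Fintype a] [DecidableEq a] [Fintype b] [DecidableEq b]
    (ρ : Matrix (a × b) (a × b) ℂ) : ℝ :=
  -relEntropy ρ ((1 : Matrix a a ℂ) ⊗ₖ ptraceFst ρ)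

/-- Conditional information variance `V(A|B)_ρ`. -/
def condVar [Fintype a] [DecidableEq a] [Fintype b] [DecidableEq b]
    (ρ : Matrix (a × b) (a × b) ℂ) : ℝ :=
  relVar ρ ((1 : Matrix a a ℂ) ⊗ₖ ptraceFst ρ)

/-- The average decoupling error
`Δ = (1/2) ∫ ‖Tr_{A₁}[(U ⊗ 1_E) ρ (U ⊗ 1_E)†] - (1_C/|C|) ⊗ ρ_E‖₁ dU`,
with respect to the normalized Haar measure, for a state on `(A₁ ⊗ C) ⊗ E`. -/
def decErr {a c e : Type*} [Fintype a] [DecidableEq a] [Fintype c] [DecidableEq c]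
    [Fintype e] [DecidableEq e] (ρ : Matrix ((a × c) × e) ((a × c) × e) ℂ) : ℝ :=
  (1 / 2) * ∫ U : Matrix.unitaryGroup (a × c) ℂ,
    traceNorm
      (ptraceA1 (((U : Matrix (a × c) (a × c) ℂ) ⊗ₖ (1 : Matrix e e ℂ)) * ρ *
          ((U : Matrix (a × c) (a × c) ℂ) ⊗ₖ (1 : Matrix e e ℂ))ᴴ) -
        (((Fintype.card c : ℂ)⁻¹ • (1 : Matrix c c ℂ)) ⊗ₖ ptraceFst ρ))
    ∂(haarU (a × c))

/-! ### Asymptotics -/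

/-- `n`-fold Kronecker tensor power of a matrix. -/
def kronPow {α : Type*} [Fintype α] (ρ : Matrix α α ℂ) (N : ℕ) :
    Matrix (Fin N → α) (Fin N → α) ℂ :=
  Matrix.of fun p q => ∏ i, ρ (p i) (q i)

/-- `n`-fold Kronecker tensor power of a bipartite matrix, regarded as a bipartite
matrix on `A^n ⊗ E^n`. -/
def tensorPow {α β : Type*} [Fintype α] [Fintype β] (ρ : Matrix (α × β) (α × β) ℂ) (N : ℕ) :
    Matrix ((Fin N → α) × (Fin N → β)) ((Fin N → α) × (Fin N → β)) ℂ :=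
  Matrix.of fun p q => ∏ i, ρ (p.1 i, p.2 i) (q.1 i, q.2 i)

/-- The maximal remainder dimension `ℓ^ε(A|E)_ρ`: the largest `dC` dividing `|A|` such
that, for an identification `A ≅ A₁ ⊗ C` with `|C| = dC`, the average decoupling error
is at most `ε`. -/
def maxRemDim {α β : Type*} [Fintype α] [DecidableEq α] [Fintype β] [DecidableEq β]
    (ε : ℝ) (ρ : Matrix (α × β) (α × β) ℂ) : ℕ :=
  sSup {dC : ℕ | dC ∣ Fintype.card α ∧
    ∃ φ : α ≃ Fin (Fintype.card α / dC) × Fin dC,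
      decErr (Matrix.of fun p q => ρ (φ.symm p.1, p.2) (φ.symm q.1, q.2)) ≤ ε}

/-- The inverse of the cumulative distribution function of the standard normal
distribution. -/
def PhiInv (ε : ℝ) : ℝ :=
  sSup {u : ℝ | (∫ t in Set.Iic u, Real.exp (-(t ^ 2) / 2) / Real.sqrt (2 * Real.pi)) ≤ ε}


/-- `1_{A₁} ⊗ Y` : reinsertion of the identity on the `A₁` factor of `(A₁ ⊗ A₂) ⊗ E`. -/
def insertIdFst {a1 a2 e : Type*} [DecidableEq a1] (Y : Matrix (a2 × e) (a2 × e) ℂ) :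
    Matrix ((a1 × a2) × e) ((a1 × a2) × e) ℂ :=
  Matrix.of fun p q => (if p.1.1 = q.1.1 then (1 : ℂ) else 0) * Y (p.1.2, p.2) (q.1.2, q.2)

/-- The swap operator `F = ∑_{i,j} |i⟩⟨j| ⊗ |j⟩⟨i|` on `ℂ^α ⊗ ℂ^α`. -/
def swapOp (α : Type*) [Fintype α] [DecidableEq α] : Matrix (α × α) (α × α) ℂ :=
  ∑ i : α, ∑ j : α, (Matrix.single i j (1 : ℂ)) ⊗ₖ (Matrix.single j i (1 : ℂ))

/-- The operator on `(ℂ^{A₁} ⊗ ℂ^{A₂}) ⊗ (ℂ^{A₁} ⊗ ℂ^{A₂})` acting as the identity on the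
two `A₁` factors and as the swap on the two `A₂` factors. -/
def partialSwapOp (a1 a2 : Type*) [DecidableEq a1] [DecidableEq a2] :
    Matrix ((a1 × a2) × (a1 × a2)) ((a1 × a2) × (a1 × a2)) ℂ :=
  Matrix.of fun p q =>
    if p.1.1 = q.1.1 ∧ p.2.1 = q.2.1 ∧ p.1.2 = q.2.2 ∧ p.2.2 = q.1.2 then (1 : ℂ) else 0

end QD

namespace QD

set_option linter.unusedSectionVars false
set_option maxHeartbeats 1000000

section Aux
variable {n : Type*} [Fintype n] [DecidableEq n]

lemma psd_sum {ι : Type*} (s : Finset ι) (f : ι → Matrix n n ℂ)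
    (h : ∀ i ∈ s, (f i).PosSemidef) : (∑ i ∈ s, f i).PosSemidef := by
  classical
  induction s using Finset.induction_on with
  | empty => simpa using Matrix.PosSemidef.zero
  | insert x s hx ih =>
      rw [Finset.sum_insert hx]
      exact (h _ (Finset.mem_insert_self _ _)).add
        (ih fun i hi => h i (Finset.mem_insert_of_mem hi))

lemma psd_smul_real {X : Matrix n n ℂ} (hX : X.PosSemidef) {r : ℝ} (hr : 0 ≤ r) :
    (((r : ℂ)) • X).PosSemidef := by
  refine Matrix.PosSemidef.of_dotProduct_mulVec_nonneg ?_ ?_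
  · rw [Matrix.IsHermitian, Matrix.conjTranspose_smul, hX.1]
    congr 1
    simp
  · intro x
    rw [Matrix.smul_mulVec, dotProduct_smul]
    exact mul_nonneg (by exact_mod_cast hr) (hX.dotProduct_mulVec_nonneg x)

lemma psd_unsmul {X : Matrix n n ℂ} {r : ℝ} (hr : 0 < r) (h : (((r:ℂ)) • X).PosSemidef) :
    X.PosSemidef := by
  have hX : X = ((r⁻¹ : ℝ) : ℂ) • (((r:ℂ)) • X) := by
    rw [smul_smul, ← Complex.ofReal_mul, inv_mul_cancel₀ hr.ne', Complex.ofReal_one, one_smul]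
  rw [hX]
  exact psd_smul_real h (by positivity)

lemma unit_ct_mul (U : Matrix.unitaryGroup n ℂ) :
    ((U : Matrix n n ℂ))ᴴ * (U : Matrix n n ℂ) = 1 := by
  simpa [Matrix.star_eq_conjTranspose] using Matrix.UnitaryGroup.star_mul_self U

lemma unit_mul_ct (U : Matrix.unitaryGroup n ℂ) :
    (U : Matrix n n ℂ) * ((U : Matrix n n ℂ))ᴴ = 1 := by
  simpa [Matrix.star_eq_conjTranspose] using
    Matrix.mem_unitaryGroup_iff.mp U.2

lemma unit_conj_mul (U : Matrix.unitaryGroup n ℂ) (A B : Matrix n n ℂ) :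
    ((U : Matrix n n ℂ) * A * (U : Matrix n n ℂ)ᴴ) * ((U : Matrix n n ℂ) * B * (U : Matrix n n ℂ)ᴴ)
      = (U : Matrix n n ℂ) * (A * B) * (U : Matrix n n ℂ)ᴴ := by
  have h := unit_ct_mul U
  calc ((U : Matrix n n ℂ) * A * (U : Matrix n n ℂ)ᴴ) *
        ((U : Matrix n n ℂ) * B * (U : Matrix n n ℂ)ᴴ)
      = (U : Matrix n n ℂ) * (A * (((U : Matrix n n ℂ)ᴴ * (U : Matrix n n ℂ)) * (B *
          (U : Matrix n n ℂ)ᴴ))) := by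
        simp only [Matrix.mul_assoc]
    _ = (U : Matrix n n ℂ) * (A * B) * (U : Matrix n n ℂ)ᴴ := by
        rw [h, Matrix.one_mul]; simp only [Matrix.mul_assoc]

lemma diag_sum {ι : Type*} (s : Finset ι) (g : ι → n → ℂ) :
    ∑ μ ∈ s, Matrix.diagonal (g μ) = Matrix.diagonal (fun i => ∑ μ ∈ s, g μ i) := by
  ext i j
  rw [Matrix.sum_apply]
  by_cases hij : i = j
  · subst hij; simp [Matrix.diagonal_apply_eq]
  · simp [Matrix.diagonal_apply_ne _ hij]

variable {H : Matrix n n ℂ}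

lemma eigvals_of_herm (h : H.IsHermitian) : eigvals H = h.eigenvalues := dif_pos h

lemma eigProj_of_herm (h : H.IsHermitian) (μ : ℝ) :
    eigProj H μ = (h.eigenvectorUnitary : Matrix n n ℂ) *
      Matrix.diagonal (fun i => if h.eigenvalues i = μ then (1 : ℂ) else 0) *
      (h.eigenvectorUnitary : Matrix n n ℂ)ᴴ := dif_pos h

lemma spectral (h : H.IsHermitian) :
    H = (h.eigenvectorUnitary : Matrix n n ℂ) *
      Matrix.diagonal (fun i => ((h.eigenvalues i : ℝ) : ℂ)) *
      (h.eigenvectorUnitary : Matrix n n ℂ)ᴴ := by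
  have h1 := h.spectral_theorem
  rw [Unitary.conjStarAlgAut_apply] at h1
  rw [← Matrix.star_eq_conjTranspose]
  convert h1 using 3
  all_goals rfl

lemma sum_eigProj (h : H.IsHermitian) :
    ∑ μ ∈ Finset.univ.image (eigvals H), eigProj H μ = 1 := by
  rw [eigvals_of_herm h]
  calc ∑ μ ∈ Finset.univ.image h.eigenvalues, eigProj H μ
      = (h.eigenvectorUnitary : Matrix n n ℂ) *
          (∑ μ ∈ Finset.univ.image h.eigenvalues,
            Matrix.diagonal (fun i => if h.eigenvalues i = μ then (1 : ℂ) else 0)) *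
          (h.eigenvectorUnitary : Matrix n n ℂ)ᴴ := by
        rw [Finset.mul_sum, Finset.sum_mul]
        exact Finset.sum_congr rfl fun μ _ => eigProj_of_herm h μ
    _ = 1 := by
        rw [diag_sum]
        have heq : (fun i => ∑ μ ∈ Finset.univ.image h.eigenvalues,
            if h.eigenvalues i = μ then (1 : ℂ) else 0) = fun _ => (1 : ℂ) := by
          funext i
          rw [Finset.sum_ite_eq]
          simp [Finset.mem_image_of_mem _ (Finset.mem_univ i)]
        rw [heq, Matrix.diagonal_one, Matrix.mul_one, unit_mul_ct]

end Aux

section Aux2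
variable {n : Type*} [Fintype n] [DecidableEq n] {H : Matrix n n ℂ}

lemma eigProj_mul (h : H.IsHermitian) (μ ν : ℝ) :
    eigProj H μ * eigProj H ν = if μ = ν then eigProj H μ else 0 := by
  by_cases hμν : μ = ν
  · subst hμν
    rw [if_pos rfl]
    conv_lhs => rw [eigProj_of_herm h, unit_conj_mul, Matrix.diagonal_mul_diagonal]
    rw [eigProj_of_herm h]
    have hfun : (fun i => (if h.eigenvalues i = μ then (1:ℂ) else 0) *
        (if h.eigenvalues i = μ then (1:ℂ) else 0)) =
        fun i => (if h.eigenvalues i = μ then (1:ℂ) else 0) := by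
      funext i
      by_cases hi : h.eigenvalues i = μ <;> simp [hi]
    rw [hfun]
  · rw [if_neg hμν, eigProj_of_herm h, eigProj_of_herm h, unit_conj_mul,
      Matrix.diagonal_mul_diagonal]
    have hfun : (fun i => (if h.eigenvalues i = μ then (1:ℂ) else 0) *
        (if h.eigenvalues i = ν then (1:ℂ) else 0)) = fun _ => (0:ℂ) := by
      funext i
      by_cases h1 : h.eigenvalues i = μ
      · have h2 : ¬ h.eigenvalues i = ν := fun hh => hμν (h1 ▸ hh ▸ rfl)
        simp [h1, h2, hμν]
      · simp [h1]
    rw [hfun, Matrix.diagonal_zero, Matrix.mul_zero, Matrix.zero_mul]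

lemma eigProj_conjT (h : H.IsHermitian) (μ : ℝ) : (eigProj H μ)ᴴ = eigProj H μ := by
  rw [eigProj_of_herm h]
  rw [Matrix.conjTranspose_mul, Matrix.conjTranspose_mul, Matrix.conjTranspose_conjTranspose,
    Matrix.diagonal_conjTranspose, Matrix.mul_assoc]
  have hfun : star (fun i => if h.eigenvalues i = μ then (1:ℂ) else 0) =
      fun i => if h.eigenvalues i = μ then (1:ℂ) else 0 := by
    funext i
    by_cases hi : h.eigenvalues i = μ <;> simp [hi, Pi.star_apply]
  rw [hfun]

lemma eigProj_mul_self (h : H.IsHermitian) (μ : ℝ) :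
    eigProj H μ * H = ((μ : ℂ)) • eigProj H μ ∧
    H * eigProj H μ = ((μ : ℂ)) • eigProj H μ := by
  have hd1 : Matrix.diagonal (fun i => (if h.eigenvalues i = μ then (1:ℂ) else 0) *
        ((h.eigenvalues i : ℝ) : ℂ))
      = (μ:ℂ) • Matrix.diagonal (fun i => if h.eigenvalues i = μ then (1:ℂ) else 0) := by
    ext i j
    simp only [Matrix.smul_apply, Matrix.diagonal_apply]
    by_cases hij : i = j
    · subst hij
      by_cases hi : h.eigenvalues i = μ <;> simp [hi]
    · simp [hij]
  have hd2 : Matrix.diagonal (fun i => ((h.eigenvalues i : ℝ) : ℂ) *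
        (if h.eigenvalues i = μ then (1:ℂ) else 0))
      = (μ:ℂ) • Matrix.diagonal (fun i => if h.eigenvalues i = μ then (1:ℂ) else 0) := by
    ext i j
    simp only [Matrix.smul_apply, Matrix.diagonal_apply]
    by_cases hij : i = j
    · subst hij
      by_cases hi : h.eigenvalues i = μ <;> simp [hi]
    · simp [hij]
  constructor
  · calc eigProj H μ * H
        = ((h.eigenvectorUnitary : Matrix n n ℂ) *
            Matrix.diagonal (fun i => if h.eigenvalues i = μ then (1:ℂ) else 0) *
            (h.eigenvectorUnitary : Matrix n n ℂ)ᴴ) *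
          ((h.eigenvectorUnitary : Matrix n n ℂ) *
            Matrix.diagonal (fun i => ((h.eigenvalues i : ℝ) : ℂ)) *
            (h.eigenvectorUnitary : Matrix n n ℂ)ᴴ) := by
          rw [← eigProj_of_herm h, ← spectral h]
      _ = ((μ : ℂ)) • eigProj H μ := by
          rw [unit_conj_mul, Matrix.diagonal_mul_diagonal, hd1,
            Matrix.mul_smul, Matrix.smul_mul, ← eigProj_of_herm h]
  · calc H * eigProj H μ
        = ((h.eigenvectorUnitary : Matrix n n ℂ) *
            Matrix.diagonal (fun i => ((h.eigenvalues i : ℝ) : ℂ)) *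
            (h.eigenvectorUnitary : Matrix n n ℂ)ᴴ) *
          ((h.eigenvectorUnitary : Matrix n n ℂ) *
            Matrix.diagonal (fun i => if h.eigenvalues i = μ then (1:ℂ) else 0) *
            (h.eigenvectorUnitary : Matrix n n ℂ)ᴴ) := by
          rw [← eigProj_of_herm h, ← spectral h]
      _ = ((μ : ℂ)) • eigProj H μ := by
          rw [unit_conj_mul, Matrix.diagonal_mul_diagonal, hd2,
            Matrix.mul_smul, Matrix.smul_mul, ← eigProj_of_herm h]

end Aux2

section Aux3
variable {n : Type*} [Fintype n] [DecidableEq n]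

lemma projLE_of_herm {X Y : Matrix n n ℂ} (h : (Y - X).IsHermitian) :
    projLE X Y = (h.eigenvectorUnitary : Matrix n n ℂ) *
      Matrix.diagonal (fun i => if 0 ≤ h.eigenvalues i then (1 : ℂ) else 0) *
      (h.eigenvectorUnitary : Matrix n n ℂ)ᴴ := dif_pos h

lemma projLE_conjT {X Y : Matrix n n ℂ} (h : (Y - X).IsHermitian) :
    (projLE X Y)ᴴ = projLE X Y := by
  rw [projLE_of_herm h, Matrix.conjTranspose_mul, Matrix.conjTranspose_mul,
    Matrix.conjTranspose_conjTranspose, Matrix.diagonal_conjTranspose, Matrix.mul_assoc]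
  have hfun : star (fun i => if 0 ≤ h.eigenvalues i then (1:ℂ) else 0) =
      fun i => if 0 ≤ h.eigenvalues i then (1:ℂ) else 0 := by
    funext i
    by_cases hi : 0 ≤ h.eigenvalues i <;> simp [hi, Pi.star_apply]
  rw [hfun]

lemma projLE_idem {X Y : Matrix n n ℂ} (h : (Y - X).IsHermitian) :
    projLE X Y * projLE X Y = projLE X Y := by
  rw [projLE_of_herm h, unit_conj_mul, Matrix.diagonal_mul_diagonal]
  have hfun : (fun i => (if 0 ≤ h.eigenvalues i then (1:ℂ) else 0) *
      (if 0 ≤ h.eigenvalues i then (1:ℂ) else 0)) =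
      fun i => if 0 ≤ h.eigenvalues i then (1:ℂ) else 0 := by
    funext i
    by_cases hi : 0 ≤ h.eigenvalues i <;> simp [hi]
  rw [hfun]

lemma projLE_conj_psd {X Y : Matrix n n ℂ} (h : (Y - X).IsHermitian) :
    (projLE X Y * (Y - X) * projLE X Y).PosSemidef := by
  have key : projLE X Y * (Y - X) * projLE X Y =
      (h.eigenvectorUnitary : Matrix n n ℂ) *
        Matrix.diagonal (fun i => if 0 ≤ h.eigenvalues i then ((h.eigenvalues i : ℝ):ℂ) else 0) *
        (h.eigenvectorUnitary : Matrix n n ℂ)ᴴ := by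
    calc projLE X Y * (Y - X) * projLE X Y
        = ((h.eigenvectorUnitary : Matrix n n ℂ) *
            Matrix.diagonal (fun i => if 0 ≤ h.eigenvalues i then (1:ℂ) else 0) *
            (h.eigenvectorUnitary : Matrix n n ℂ)ᴴ) *
          ((h.eigenvectorUnitary : Matrix n n ℂ) *
            Matrix.diagonal (fun i => ((h.eigenvalues i : ℝ) : ℂ)) *
            (h.eigenvectorUnitary : Matrix n n ℂ)ᴴ) *
          ((h.eigenvectorUnitary : Matrix n n ℂ) *
            Matrix.diagonal (fun i => if 0 ≤ h.eigenvalues i then (1:ℂ) else 0) *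
            (h.eigenvectorUnitary : Matrix n n ℂ)ᴴ) := by
          rw [← projLE_of_herm h, ← spectral h]
      _ = (h.eigenvectorUnitary : Matrix n n ℂ) *
            Matrix.diagonal (fun i => if 0 ≤ h.eigenvalues i then ((h.eigenvalues i : ℝ):ℂ) else 0) *
            (h.eigenvectorUnitary : Matrix n n ℂ)ᴴ := by
          rw [unit_conj_mul, unit_conj_mul, Matrix.diagonal_mul_diagonal,
            Matrix.diagonal_mul_diagonal]
          have hfun : (fun i => (if 0 ≤ h.eigenvalues i then (1:ℂ) else 0) *
              ((h.eigenvalues i : ℝ) : ℂ) * (if 0 ≤ h.eigenvalues i then (1:ℂ) else 0)) =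
              fun i => if 0 ≤ h.eigenvalues i then ((h.eigenvalues i : ℝ):ℂ) else 0 := by
            funext i
            by_cases hi : 0 ≤ h.eigenvalues i <;> simp [hi]
          rw [hfun]
  rw [key]
  refine Matrix.PosSemidef.mul_mul_conjTranspose_same ?_ _
  refine Matrix.PosSemidef.diagonal ?_
  intro i
  simp only [Pi.zero_apply]
  by_cases hi : 0 ≤ h.eigenvalues i
  · simp only [hi, if_true]
    exact_mod_cast hi
  · simp [hi]

lemma projLE_comm {X Y A : Matrix n n ℂ} (h : (Y - X).IsHermitian)
    (hA : A * (Y - X) = (Y - X) * A) : A * projLE X Y = projLE X Y * A := by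
  set V : Matrix n n ℂ := (h.eigenvectorUnitary : Matrix n n ℂ) with hV
  have hVs : Vᴴ * V = 1 := unit_ct_mul _
  have hVs' : V * Vᴴ = 1 := unit_mul_ct _
  set B : Matrix n n ℂ := Vᴴ * A * V with hB
  set l : n → ℂ := fun i => ((h.eigenvalues i : ℝ) : ℂ) with hl
  set g : n → ℂ := fun i => if 0 ≤ h.eigenvalues i then (1:ℂ) else 0 with hg
  have hAVV : A = V * B * Vᴴ := by
    rw [hB]
    calc A = (V * Vᴴ) * A * (V * Vᴴ) := by rw [hVs', Matrix.one_mul, Matrix.mul_one]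
    _ = V * (Vᴴ * A * V) * Vᴴ := by simp only [Matrix.mul_assoc]
  have hBD : B * Matrix.diagonal l = Matrix.diagonal l * B := by
    have h1 : A * (V * Matrix.diagonal l * Vᴴ) = (V * Matrix.diagonal l * Vᴴ) * A := by
      rw [← spectral h]; exact hA
    rw [hAVV] at h1
    rw [unit_conj_mul, unit_conj_mul] at h1
    have h2 : Vᴴ * (V * (B * Matrix.diagonal l) * Vᴴ) * V =
        Vᴴ * (V * (Matrix.diagonal l * B) * Vᴴ) * V := by rw [h1]
    calc B * Matrix.diagonal l
        = (Vᴴ * V) * (B * Matrix.diagonal l) * (Vᴴ * V) := by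
          rw [hVs, Matrix.one_mul, Matrix.mul_one]
      _ = Vᴴ * (V * (B * Matrix.diagonal l) * Vᴴ) * V := by simp only [Matrix.mul_assoc]
      _ = Vᴴ * (V * (Matrix.diagonal l * B) * Vᴴ) * V := h2
      _ = (Vᴴ * V) * (Matrix.diagonal l * B) * (Vᴴ * V) := by simp only [Matrix.mul_assoc]
      _ = Matrix.diagonal l * B := by rw [hVs, Matrix.one_mul, Matrix.mul_one]
  have hBg : B * Matrix.diagonal g = Matrix.diagonal g * B := by
    ext i j
    rw [Matrix.mul_diagonal, Matrix.diagonal_mul]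
    by_cases hB0 : B i j = 0
    · rw [hB0, mul_zero, zero_mul]
    · have hentry : B i j * l j = l i * B i j := by
        have := congrFun (congrFun hBD i) j
        simpa [Matrix.mul_diagonal, Matrix.diagonal_mul] using this
      have hll : l j = l i := by
        have : B i j * l j = B i j * l i := by rw [hentry, mul_comm]
        exact mul_left_cancel₀ hB0 this
      have hreal : h.eigenvalues j = h.eigenvalues i := by
        have h3 : ((h.eigenvalues j : ℝ) : ℂ) = ((h.eigenvalues i : ℝ) : ℂ) := hll
        exact_mod_cast h3
      have hgg : g j = g i := by rw [hg]; simp only [hreal]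
      rw [hgg, mul_comm]
  calc A * projLE X Y
      = (V * B * Vᴴ) * (V * Matrix.diagonal g * Vᴴ) := by
        rw [← hAVV, projLE_of_herm h]
    _ = V * (B * Matrix.diagonal g) * Vᴴ := unit_conj_mul _ _ _
    _ = V * (Matrix.diagonal g * B) * Vᴴ := by rw [hBg]
    _ = (V * Matrix.diagonal g * Vᴴ) * (V * B * Vᴴ) := (unit_conj_mul _ _ _).symm
    _ = projLE X Y * A := by rw [← hAVV, projLE_of_herm h]

lemma psd_smul_one_sub {B : Matrix n n ℂ} (hB : B.PosSemidef) {k : ℝ} (hk : 0 < k)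
    (h2 : (((k:ℂ)) • B - B * B).PosSemidef) :
    (((k:ℂ)) • (1 : Matrix n n ℂ) - B).PosSemidef := by
  have hH := hB.1
  set V : Matrix n n ℂ := (hH.eigenvectorUnitary : Matrix n n ℂ) with hV
  have hVs : Vᴴ * V = 1 := unit_ct_mul _
  have hVs' : V * Vᴴ = 1 := unit_mul_ct _
  set l : n → ℂ := fun i => ((hH.eigenvalues i : ℝ) : ℂ) with hl
  have hBspec : B = V * Matrix.diagonal l * Vᴴ := spectral hH
  have hdiag : Vᴴ * (((k:ℂ)) • B - B * B) * V =
      Matrix.diagonal (fun i => ((k * hH.eigenvalues i - hH.eigenvalues i * hH.eigenvalues i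
        : ℝ) : ℂ)) := by
    have hVBV : Vᴴ * B * V = Matrix.diagonal l := by
      rw [hBspec]
      calc Vᴴ * (V * Matrix.diagonal l * Vᴴ) * V
          = (Vᴴ * V) * Matrix.diagonal l * (Vᴴ * V) := by simp only [Matrix.mul_assoc]
        _ = Matrix.diagonal l := by rw [hVs, Matrix.one_mul, Matrix.mul_one]
    have hVBBV : Vᴴ * (B * B) * V = Matrix.diagonal l * Matrix.diagonal l := by
      calc Vᴴ * (B * B) * V = Vᴴ * (B * (V * Vᴴ) * B) * V := by
            rw [hVs', Matrix.mul_one]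
        _ = (Vᴴ * B * V) * (Vᴴ * B * V) := by simp only [Matrix.mul_assoc]
        _ = Matrix.diagonal l * Matrix.diagonal l := by rw [hVBV]
    rw [Matrix.mul_sub, Matrix.sub_mul, Matrix.mul_smul, Matrix.smul_mul, hVBV, hVBBV,
      Matrix.diagonal_mul_diagonal, ← Matrix.diagonal_smul, Matrix.diagonal_sub]
    congr 1
    funext i
    rw [hl]
    simp only [Pi.smul_apply, smul_eq_mul]
    push_cast
    ring
  have hpsd := h2.conjTranspose_mul_mul_same V
  rw [hdiag] at hpsd
  have hent := Matrix.posSemidef_diagonal_iff.mp hpsd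
  have hkl : ∀ i, 0 ≤ k - hH.eigenvalues i := by
    intro i
    have h0 : (0:ℝ) ≤ k * hH.eigenvalues i - hH.eigenvalues i * hH.eigenvalues i := by
      have := hent i
      exact_mod_cast this
    have hl0 : 0 ≤ hH.eigenvalues i := hB.eigenvalues_nonneg i
    nlinarith
  have key : ((k:ℂ)) • (1 : Matrix n n ℂ) - B =
      V * Matrix.diagonal (fun i => ((k - hH.eigenvalues i : ℝ) : ℂ)) * Vᴴ := by
    have hd : Matrix.diagonal (fun i => ((k - hH.eigenvalues i : ℝ) : ℂ)) =
        ((k:ℂ)) • (1 : Matrix n n ℂ) - Matrix.diagonal l := by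
      rw [hl, ← Matrix.diagonal_one, ← Matrix.diagonal_smul, Matrix.diagonal_sub]
      congr 1
      funext i
      simp only [Pi.smul_apply, Pi.one_apply, smul_eq_mul]
      push_cast
      ring
    rw [hd, Matrix.mul_sub, Matrix.sub_mul, Matrix.mul_smul, Matrix.smul_mul, Matrix.mul_one,
      hVs', ← hBspec]
  rw [key]
  refine Matrix.PosSemidef.mul_mul_conjTranspose_same ?_ _
  refine Matrix.PosSemidef.diagonal ?_
  intro i
  simp only [Pi.zero_apply]
  exact_mod_cast hkl i

end Aux3

section Aux4
variable {n : Type*} [Fintype n] [DecidableEq n]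

lemma psd_pinch {ι : Type*} (s : Finset ι) (f : ι → Matrix n n ℂ) {ρ : Matrix n n ℂ}
    (hρ : ρ.PosSemidef) (hherm : ∀ μ ∈ s, (f μ)ᴴ = f μ) (hsum : ∑ μ ∈ s, f μ = 1) :
    (((s.card : ℂ)) • (∑ μ ∈ s, f μ * ρ * f μ) - ρ).PosSemidef := by
  classical
  set P : Matrix n n ℂ := ∑ μ ∈ s, f μ * ρ * f μ with hP
  have hXpsd : (∑ μ ∈ s, ∑ ν ∈ s, (f μ - f ν)ᴴ * ρ * (f μ - f ν)).PosSemidef :=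
    psd_sum s _ fun μ _ => psd_sum s _ fun ν _ => hρ.conjTranspose_mul_mul_same _
  have hterm : ∀ μ ∈ s, ∀ ν ∈ s, (f μ - f ν)ᴴ * ρ * (f μ - f ν) =
      f μ * ρ * f μ + f ν * ρ * f ν - (f μ * ρ * f ν + f ν * ρ * f μ) := by
    intro μ hμ ν hν
    rw [Matrix.conjTranspose_sub, hherm μ hμ, hherm ν hν]
    noncomm_ring
  have hX : (∑ μ ∈ s, ∑ ν ∈ s, (f μ - f ν)ᴴ * ρ * (f μ - f ν)) =
      (2:ℂ) • (((s.card : ℂ)) • P - ρ) := by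
    rw [Finset.sum_congr rfl fun μ hμ => Finset.sum_congr rfl fun ν hν => hterm μ hμ ν hν]
    have h1 : ∑ μ ∈ s, ∑ ν ∈ s, (f μ * ρ * f μ + f ν * ρ * f ν -
        (f μ * ρ * f ν + f ν * ρ * f μ)) =
        (∑ μ ∈ s, ∑ ν ∈ s, f μ * ρ * f μ) + (∑ μ ∈ s, ∑ ν ∈ s, f ν * ρ * f ν) -
        ((∑ μ ∈ s, ∑ ν ∈ s, f μ * ρ * f ν) + (∑ μ ∈ s, ∑ ν ∈ s, f ν * ρ * f μ)) := by
      simp only [Finset.sum_sub_distrib, Finset.sum_add_distrib]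
    rw [h1]
    have h2 : ∑ μ ∈ s, ∑ ν ∈ s, f μ * ρ * f μ = ((s.card : ℂ)) • P := by
      rw [hP, Finset.smul_sum]
      refine Finset.sum_congr rfl fun μ _ => ?_
      rw [Finset.sum_const, Nat.cast_smul_eq_nsmul]
    have h3 : ∑ μ ∈ s, ∑ ν ∈ s, f ν * ρ * f ν = ((s.card : ℂ)) • P := by
      rw [Finset.sum_comm]
      exact h2
    have h4 : ∑ μ ∈ s, ∑ ν ∈ s, f μ * ρ * f ν = ρ := by
      have : ∀ μ ∈ s, ∑ ν ∈ s, f μ * ρ * f ν = f μ * ρ := by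
        intro μ _
        rw [← Finset.mul_sum, hsum, Matrix.mul_one]
      rw [Finset.sum_congr rfl this, ← Finset.sum_mul, hsum, Matrix.one_mul]
    have h5 : ∑ μ ∈ s, ∑ ν ∈ s, f ν * ρ * f μ = ρ := by
      have : ∀ μ ∈ s, ∑ ν ∈ s, f ν * ρ * f μ = ρ * f μ := by
        intro μ _
        simp only [← Finset.sum_mul]
        rw [hsum, Matrix.one_mul]
      rw [Finset.sum_congr rfl this, ← Finset.mul_sum, hsum, Matrix.mul_one]
    rw [h2, h3, h4, h5]
    rw [two_smul]
    abel
  rw [hX] at hXpsd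
  have h2 : ((((2:ℝ)):ℂ) • (((s.card : ℂ)) • P - ρ)).PosSemidef := by
    rw [show (((2:ℝ)):ℂ) = (2:ℂ) by norm_num]
    exact hXpsd
  exact psd_unsmul (by norm_num : (0:ℝ) < 2) h2

end Aux4

section Aux5
variable {a b : Type*} [Fintype a] [Fintype b] [DecidableEq a] [DecidableEq b]

/-- The isometry embedding `ℂ^b → ℂ^(a×b)` onto the slice `x`. -/
def emb (a : Type*) [DecidableEq a] [DecidableEq b] (x : a) : Matrix (a × b) b ℂ :=
  Matrix.of fun p j => if p = (x, j) then 1 else 0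

lemma sum_mulVec' {ι m l : Type*} [Fintype l] (s : Finset ι) (f : ι → Matrix m l ℂ)
    (v : l → ℂ) : (∑ i ∈ s, f i) *ᵥ v = ∑ i ∈ s, (f i) *ᵥ v := by
  funext p
  rw [Finset.sum_apply]
  simp only [Matrix.mulVec, dotProduct, Matrix.sum_apply, Finset.sum_mul]
  exact Finset.sum_comm

lemma dot_sum {ι l : Type*} [Fintype l] (v : l → ℂ) (s : Finset ι) (f : ι → l → ℂ) :
    dotProduct v (∑ i ∈ s, f i) = ∑ i ∈ s, dotProduct v (f i) := by
  simp only [dotProduct, Finset.sum_apply, Finset.mul_sum]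
  exact Finset.sum_comm

lemma emb_conj_mul_mul (x : a) (ρ : Matrix (a × b) (a × b) ℂ) (i j : b) :
    ((emb (b := b) a x).conjTranspose * ρ * emb (b := b) a x : Matrix b b ℂ) i j = ρ (x, i) (x, j) := by
  rw [Matrix.mul_apply]
  have h1 : ∀ q, ((emb (b := b) a x).conjTranspose * ρ : Matrix b (a × b) ℂ) i q = ρ (x, i) q := by
    intro q
    rw [Matrix.mul_apply]
    rw [Finset.sum_eq_single_of_mem (x, i) (Finset.mem_univ _)]
    · simp [emb, Matrix.conjTranspose_apply]
    · intro p _ hp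
      simp [emb, Matrix.conjTranspose_apply, hp]
  simp only [h1]
  rw [Finset.sum_eq_single_of_mem (x, j) (Finset.mem_univ _)]
  · simp [emb]
  · intro q _ hq
    simp [emb, hq]

lemma ptraceFst_eq_sum (ρ : Matrix (a × b) (a × b) ℂ) :
    ptraceFst ρ = ∑ x : a, (emb (b := b) a x).conjTranspose * ρ * emb (b := b) a x := by
  ext i j
  rw [Matrix.sum_apply]
  simp only [emb_conj_mul_mul]
  rfl

lemma mul_mul_emb_conj (x : a) (E : Matrix b b ℂ) (p q : a × b) :
    (emb (b := b) a x * E * (emb (b := b) a x).conjTranspose : Matrix (a × b) (a × b) ℂ) p q =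
      (if p.1 = x ∧ q.1 = x then E p.2 q.2 else 0) := by
  rw [Matrix.mul_apply]
  have h1 : ∀ i, (emb (b := b) a x * E : Matrix (a × b) b ℂ) p i = if p.1 = x then E p.2 i else 0 := by
    intro i
    rw [Matrix.mul_apply]
    rcases p with ⟨p1, p2⟩
    rw [Finset.sum_eq_single_of_mem p2 (Finset.mem_univ _)]
    · by_cases hp : p1 = x <;> simp [emb, hp, Prod.ext_iff]
    · intro k _ hk
      simp [emb, Prod.ext_iff, Ne.symm hk]
  simp only [h1]
  rcases q with ⟨q1, q2⟩
  rw [Finset.sum_eq_single_of_mem q2 (Finset.mem_univ _)]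
  · by_cases hq : q1 = x <;> by_cases hp : p.1 = x <;>
      simp [emb, Matrix.conjTranspose_apply, hq, hp, Prod.ext_iff]
  · intro k _ hk
    simp [emb, Matrix.conjTranspose_apply, Prod.ext_iff, Ne.symm hk]

lemma one_kron_eq_sum (E : Matrix b b ℂ) :
    (1 : Matrix a a ℂ) ⊗ₖ E = ∑ x : a, emb (b := b) a x * E * (emb (b := b) a x).conjTranspose := by
  ext p q
  rw [Matrix.sum_apply]
  simp only [mul_mul_emb_conj]
  rcases p with ⟨p1, p2⟩
  rcases q with ⟨q1, q2⟩
  rw [Matrix.kroneckerMap_apply]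
  by_cases hpq : p1 = q1
  · subst hpq
    rw [Finset.sum_eq_single_of_mem p1 (Finset.mem_univ _)]
    · simp [Matrix.one_apply]
    · intro k _ hk
      simp [Ne.symm hk]
  · rw [Matrix.one_apply_ne hpq, zero_mul]
    rw [Finset.sum_eq_zero]
    intro k _
    by_cases h1 : p1 = k <;> by_cases h2 : q1 = k
    · exact absurd (h1.trans h2.symm) hpq
    · simp [h1, h2]
    · simp [h1, h2]
    · simp [h1, h2]

lemma quad_conj {m l : Type*} [Fintype m] [Fintype l] (B : Matrix m l ℂ)
    (ρ : Matrix m m ℂ) (v : l → ℂ) :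
    dotProduct (star v) ((Bᴴ * ρ * B) *ᵥ v) =
      dotProduct (star (B *ᵥ v)) (ρ *ᵥ (B *ᵥ v)) := by
  simp only [Matrix.star_mulVec, dotProduct_mulVec, Matrix.vecMul_vecMul]

lemma emb_mulVec (x : a) (v : b → ℂ) (p : a × b) :
    (emb (b := b) a x *ᵥ v) p = if p.1 = x then v p.2 else 0 := by
  rcases p with ⟨p1, p2⟩
  rw [Matrix.mulVec, dotProduct]
  rw [Finset.sum_eq_single_of_mem p2 (Finset.mem_univ _)]
  · by_cases hp : p1 = x <;> simp [emb, hp, Prod.ext_iff]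
  · intro k _ hk
    simp [emb, Prod.ext_iff, Ne.symm hk]

lemma emb_conj_mulVec (x : a) (v : a × b → ℂ) (i : b) :
    ((emb (b := b) a x).conjTranspose *ᵥ v) i = v (x, i) := by
  rw [Matrix.mulVec, dotProduct]
  rw [Finset.sum_eq_single_of_mem (x, i) (Finset.mem_univ _)]
  · simp [emb, Matrix.conjTranspose_apply]
  · intro p _ hp
    simp [emb, Matrix.conjTranspose_apply, hp]

lemma ptraceFst_posDef [Nonempty a] {ρ : Matrix (a × b) (a × b) ℂ} (hρ : ρ.PosDef) :
    (ptraceFst ρ).PosDef := by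
  rw [ptraceFst_eq_sum]
  have hpsd : (∑ x : a, (emb (b := b) a x).conjTranspose * ρ * emb (b := b) a x).PosSemidef :=
    psd_sum _ _ fun x _ => hρ.posSemidef.conjTranspose_mul_mul_same _
  refine Matrix.PosDef.of_dotProduct_mulVec_pos hpsd.1 ?_
  intro v hv
  rw [sum_mulVec', dot_sum]
  refine Finset.sum_pos (fun x _ => ?_) Finset.univ_nonempty
  rw [quad_conj]
  refine hρ.dotProduct_mulVec_pos ?_
  intro h0
  apply hv
  funext i
  have h2 := congrFun h0 (x, i)
  rw [emb_mulVec] at h2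
  simpa using h2

lemma one_kron_posDef {E : Matrix b b ℂ} (hE : E.PosDef) :
    ((1 : Matrix a a ℂ) ⊗ₖ E).PosDef := by
  rw [one_kron_eq_sum]
  have hpsd : (∑ x : a, emb (b := b) a x * E * (emb (b := b) a x).conjTranspose).PosSemidef :=
    psd_sum _ _ fun x _ => hE.posSemidef.mul_mul_conjTranspose_same _
  refine Matrix.PosDef.of_dotProduct_mulVec_pos hpsd.1 ?_
  intro v hv
  rw [sum_mulVec', dot_sum]
  have hterm : ∀ x : a, dotProduct (star v) ((emb (b := b) a x * E * (emb (b := b) a x).conjTranspose) *ᵥ v) =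
      dotProduct (star ((emb (b := b) a x).conjTranspose *ᵥ v)) (E *ᵥ ((emb (b := b) a x).conjTranspose *ᵥ v)) := by
    intro x
    have h := quad_conj ((emb (b := b) a x).conjTranspose) E v
    rw [Matrix.conjTranspose_conjTranspose] at h
    exact h
  simp only [hterm]
  obtain ⟨p, hp⟩ := Function.ne_iff.mp hv
  refine Finset.sum_pos' (fun x _ => hE.posSemidef.dotProduct_mulVec_nonneg _) ⟨p.1, Finset.mem_univ _, ?_⟩
  refine hE.dotProduct_mulVec_pos ?_
  intro h0
  apply hp
  have h2 := congrFun h0 p.2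
  rw [emb_conj_mulVec] at h2
  simpa using h2

end Aux5

section Aux6
variable {a b : Type*} [Fintype a] [Fintype b] [DecidableEq a] [DecidableEq b]

lemma one_kron_conjTranspose (A : Matrix b b ℂ) :
    ((1 : Matrix a a ℂ) ⊗ₖ A)ᴴ = (1 : Matrix a a ℂ) ⊗ₖ Aᴴ := by
  ext p q
  rcases p with ⟨p1, p2⟩
  rcases q with ⟨q1, q2⟩
  simp only [Matrix.conjTranspose_apply, Matrix.kroneckerMap_apply]
  by_cases h : p1 = q1
  · subst h
    simp [Matrix.one_apply]
  · simp [Matrix.one_apply_ne h, Matrix.one_apply_ne (Ne.symm h)]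

lemma one_kron_mul (A B : Matrix b b ℂ) :
    ((1 : Matrix a a ℂ) ⊗ₖ A) * ((1 : Matrix a a ℂ) ⊗ₖ B) =
      (1 : Matrix a a ℂ) ⊗ₖ (A * B) := by
  rw [← Matrix.mul_kronecker_mul, Matrix.one_mul]

lemma one_kron_sumF {ι : Type*} (s : Finset ι) (g : ι → Matrix b b ℂ) :
    (1 : Matrix a a ℂ) ⊗ₖ (∑ μ ∈ s, g μ) = ∑ μ ∈ s, (1 : Matrix a a ℂ) ⊗ₖ g μ := by
  ext p q
  rw [Matrix.sum_apply]
  simp only [Matrix.kroneckerMap_apply, Matrix.sum_apply, Finset.mul_sum]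

end Aux6

section Aux7
variable {n : Type*} [Fintype n] [DecidableEq n]

lemma conj_smul_sub (C X Y : Matrix n n ℂ) (k : ℂ) :
    Cᴴ * (k • X - Y) * C = k • (Cᴴ * X * C) - Cᴴ * Y * C := by
  rw [Matrix.mul_sub, Matrix.sub_mul, Matrix.mul_smul, Matrix.smul_mul]

end Aux7

open scoped MatrixOrder in
lemma psd_sqrt_facts {m : Type*} [Fintype m] [DecidableEq m] {A : Matrix m m ℂ}
    (hA : A.PosSemidef) : ∃ S : Matrix m m ℂ, S.PosSemidef ∧ S * S = A :=
  ⟨CFC.sqrt A, Matrix.nonneg_iff_posSemidef.mp (CFC.sqrt_nonneg A),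
    CFC.sqrt_mul_sqrt_self A (Matrix.nonneg_iff_posSemidef.mpr hA)⟩

/-- **Pinched operator inequality** used in the achievability proof
(inequality (10) in the paper). -/
theorem pinched_operator_inequality
    (dA dE : ℕ) (ρ : Matrix (Fin dA × Fin dE) (Fin dA × Fin dE) ℂ)
    (hρ : ρ.PosDef) (hρ1 : ρ.trace = 1) (c : ℝ) (hc : 0 < c) :
    (((c * (specCount (ptraceFst ρ) : ℝ) : ℝ) : ℂ) • ρ⁻¹ -
      projLE (pinchSnd (ptraceFst ρ) ρ)
          ((c : ℂ) • ((1 : Matrix (Fin dA) (Fin dA) ℂ) ⊗ₖ ptraceFst ρ)) *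
        ((1 : Matrix (Fin dA) (Fin dA) ℂ) ⊗ₖ ptraceFst ρ)⁻¹ *
        projLE (pinchSnd (ptraceFst ρ) ρ)
          ((c : ℂ) • ((1 : Matrix (Fin dA) (Fin dA) ℂ) ⊗ₖ ptraceFst ρ))).PosSemidef := by
  classical
  by_cases hne : Nonempty (Fin dA × Fin dE)
  case neg =>
    have hempty : IsEmpty (Fin dA × Fin dE) := not_nonempty_iff.mp hne
    refine Matrix.PosSemidef.of_dotProduct_mulVec_nonneg ?_ ?_
    · ext p q
      exact (hempty.false p).elim
    · intro x
      have huniv : (Finset.univ : Finset (Fin dA × Fin dE)) = ∅ := Finset.univ_eq_empty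
      simp [dotProduct, huniv]
  case pos =>
  obtain ⟨⟨xa, xe⟩⟩ := hne
  haveI : Nonempty (Fin dA) := ⟨xa⟩
  haveI : Nonempty (Fin dE) := ⟨xe⟩
  set E : Matrix (Fin dE) (Fin dE) ℂ := ptraceFst ρ with hEdef
  have hEpd : E.PosDef := ptraceFst_posDef hρ
  have hEh : E.IsHermitian := hEpd.1
  set T : Matrix (Fin dA × Fin dE) (Fin dA × Fin dE) ℂ :=
    (1 : Matrix (Fin dA) (Fin dA) ℂ) ⊗ₖ E with hTdef
  have hTpd : T.PosDef := one_kron_posDef hEpd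
  set S : Finset ℝ := Finset.univ.image (eigvals E) with hSdef
  set f : ℝ → Matrix (Fin dA × Fin dE) (Fin dA × Fin dE) ℂ :=
    fun μ => (1 : Matrix (Fin dA) (Fin dA) ℂ) ⊗ₖ eigProj E μ with hfdef
  set P : Matrix (Fin dA × Fin dE) (Fin dA × Fin dE) ℂ := pinchSnd E ρ with hPdef
  have hPsum : P = ∑ μ ∈ S, f μ * ρ * f μ := rfl
  -- basic facts about the f μ
  have hfherm : ∀ μ ∈ S, (f μ)ᴴ = f μ := by
    intro μ _
    show ((1 : Matrix (Fin dA) (Fin dA) ℂ) ⊗ₖ eigProj E μ)ᴴ = _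
    rw [one_kron_conjTranspose, eigProj_conjT hEh]
  have hfsum : ∑ μ ∈ S, f μ = 1 := by
    show ∑ μ ∈ S, (1 : Matrix (Fin dA) (Fin dA) ℂ) ⊗ₖ eigProj E μ = 1
    rw [← one_kron_sumF, sum_eigProj hEh, Matrix.one_kronecker_one]
  have hfT : ∀ μ, f μ * T = ((μ : ℂ)) • f μ := by
    intro μ
    show ((1 : Matrix (Fin dA) (Fin dA) ℂ) ⊗ₖ eigProj E μ) *
        ((1 : Matrix (Fin dA) (Fin dA) ℂ) ⊗ₖ E) = _
    rw [one_kron_mul, (eigProj_mul_self hEh μ).1, Matrix.kronecker_smul]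
  have hTf : ∀ μ, T * f μ = ((μ : ℂ)) • f μ := by
    intro μ
    show ((1 : Matrix (Fin dA) (Fin dA) ℂ) ⊗ₖ E) *
        ((1 : Matrix (Fin dA) (Fin dA) ℂ) ⊗ₖ eigProj E μ) = _
    rw [one_kron_mul, (eigProj_mul_self hEh μ).2, Matrix.kronecker_smul]
  -- pinching inequality
  have hpinch : (((S.card : ℂ)) • P - ρ).PosSemidef := by
    rw [hPsum]
    exact psd_pinch S f hρ.posSemidef hfherm hfsum
  -- P commutes with T
  have hPT : P * T = T * P := by
    rw [hPsum, Finset.sum_mul, Finset.mul_sum]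
    refine Finset.sum_congr rfl fun μ _ => ?_
    rw [Matrix.mul_assoc (f μ * ρ), hfT, Matrix.mul_smul, ← Matrix.mul_assoc, ← Matrix.mul_assoc,
      hTf, Matrix.smul_mul, Matrix.smul_mul]
  -- Hermiticity of c•T - P
  have hPh : Pᴴ = P := by
    rw [hPsum, Matrix.conjTranspose_sum]
    refine Finset.sum_congr rfl fun μ hμ => ?_
    rw [Matrix.conjTranspose_mul, Matrix.conjTranspose_mul, hfherm μ hμ, hρ.1.eq,
      ← Matrix.mul_assoc]
  have hMh : (((c : ℂ)) • T - P).IsHermitian := by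
    show (((c : ℂ)) • T - P)ᴴ = ((c : ℂ)) • T - P
    rw [Matrix.conjTranspose_sub, Matrix.conjTranspose_smul, hPh, hTpd.1.eq]
    congr 1
    simp
  -- the projection Π
  set Pi : Matrix (Fin dA × Fin dE) (Fin dA × Fin dE) ℂ := projLE P (((c : ℂ)) • T) with hPidef
  have hPih : Piᴴ = Pi := projLE_conjT hMh
  have hPiidem : Pi * Pi = Pi := projLE_idem hMh
  have hstep2 : (Pi * (((c : ℂ)) • T - P) * Pi).PosSemidef := projLE_conj_psd hMh
  -- Π commutes with T
  have hMT : T * (((c : ℂ)) • T - P) = (((c : ℂ)) • T - P) * T := by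
    rw [Matrix.mul_sub, Matrix.sub_mul, Matrix.mul_smul, Matrix.smul_mul, hPT]
  have hcomm : T * Pi = Pi * T := projLE_comm hMh hMT
  -- step 4 : T - Π T Π is PSD
  have hPiTPi : Pi * T * Pi = Pi * T := by
    rw [Matrix.mul_assoc, hcomm, ← Matrix.mul_assoc, hPiidem]
  have hstep4 : (T - Pi * T * Pi).PosSemidef := by
    have key : T - Pi * T * Pi = (1 - Pi) * T * (1 - Pi)ᴴ := by
      rw [Matrix.conjTranspose_sub, Matrix.conjTranspose_one, hPih, hPiTPi, Matrix.sub_mul,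
        Matrix.one_mul, Matrix.mul_sub, Matrix.mul_one, Matrix.sub_mul, hPiTPi, hcomm]
      abel
    rw [key]
    exact hTpd.posSemidef.mul_mul_conjTranspose_same _
  -- cardinality
  have hScard : 1 ≤ S.card := by
    refine Finset.card_pos.mpr ?_
    exact (Finset.univ_nonempty).image _
  have hk : 0 < c * (S.card : ℝ) := by
    have : (0:ℝ) < (S.card : ℝ) := by exact_mod_cast hScard
    positivity
  -- combination : c ν T - Π ρ Π is PSD
  have hcombo : (((c * (S.card : ℝ) : ℝ) : ℂ) • T - Pi * ρ * Pi).PosSemidef := by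
    have hpinchPi : (Pi * (((S.card : ℂ)) • P - ρ) * Pi).PosSemidef := by
      have h := hpinch.mul_mul_conjTranspose_same Pi
      rwa [hPih] at h
    have hX1 : ((((S.card : ℝ)) : ℂ) • (Pi * (((c : ℂ)) • T - P) * Pi)).PosSemidef :=
      psd_smul_real hstep2 (by positivity)
    have hX3 : ((((c * (S.card : ℝ) : ℝ)) : ℂ) • (T - Pi * T * Pi)).PosSemidef :=
      psd_smul_real hstep4 hk.le
    have hsum_eq : (((c * (S.card : ℝ) : ℝ) : ℂ)) • T - Pi * ρ * Pi =
        (((S.card : ℝ) : ℂ)) • (Pi * (((c : ℂ)) • T - P) * Pi) +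
        (Pi * (((S.card : ℂ)) • P - ρ) * Pi) +
        (((c * (S.card : ℝ) : ℝ) : ℂ)) • (T - Pi * T * Pi) := by
      have e1 : Pi * (((c : ℂ)) • T - P) * Pi = ((c : ℂ)) • (Pi * T * Pi) - Pi * P * Pi := by
        rw [Matrix.mul_sub, Matrix.sub_mul, Matrix.mul_smul, Matrix.smul_mul]
      have e2 : Pi * (((S.card : ℂ)) • P - ρ) * Pi =
          ((S.card : ℂ)) • (Pi * P * Pi) - Pi * ρ * Pi := by
        rw [Matrix.mul_sub, Matrix.sub_mul, Matrix.mul_smul, Matrix.smul_mul]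
      have hcast1 : ((c * (S.card : ℝ) : ℝ) : ℂ) = (c : ℂ) * ((S.card : ℕ) : ℂ) := by
        push_cast
        ring
      have hcast2 : (((S.card : ℝ)) : ℂ) = ((S.card : ℕ) : ℂ) := by
        push_cast
        ring
      rw [e1, e2, hcast1, hcast2]
      module
    rw [hsum_eq]
    exact (hX1.add hpinchPi).add hX3
  -- invert T
  have hTdet : IsUnit T.det := isUnit_iff_ne_zero.mpr hTpd.det_pos.ne'
  have hTT : T * T⁻¹ = 1 := Matrix.mul_nonsing_inv _ hTdet
  have hT'T : T⁻¹ * T = 1 := Matrix.nonsing_inv_mul _ hTdet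
  have hTinvh : (T⁻¹)ᴴ = T⁻¹ := by
    rw [Matrix.conjTranspose_nonsing_inv, hTpd.1.eq]
  set Q : Matrix (Fin dA × Fin dE) (Fin dA × Fin dE) ℂ := Pi * T⁻¹ * Pi with hQdef
  have hQpsd : Q.PosSemidef := by
    have h := (hTpd.inv.posSemidef).conjTranspose_mul_mul_same Pi
    rwa [hPih] at h
  -- step 5 : k Q - Q ρ Q is PSD
  have hstep5 : ((((c * (S.card : ℝ) : ℝ)) : ℂ) • Q - Q * ρ * Q).PosSemidef := by
    have h := hcombo.conjTranspose_mul_mul_same (T⁻¹ * Pi)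
    rw [conj_smul_sub] at h
    have hCt : (T⁻¹ * Pi)ᴴ = Pi * T⁻¹ := by
      rw [Matrix.conjTranspose_mul, hPih, hTinvh]
    rw [hCt] at h
    have hq1 : (Pi * T⁻¹) * T * (T⁻¹ * Pi) = Q := by
      calc Pi * T⁻¹ * T * (T⁻¹ * Pi) = Pi * ((T⁻¹ * T) * (T⁻¹ * Pi)) := by
            simp only [Matrix.mul_assoc]
        _ = Pi * (T⁻¹ * Pi) := by rw [hT'T, Matrix.one_mul]
        _ = Q := by rw [hQdef, Matrix.mul_assoc]
    have hq2 : (Pi * T⁻¹) * (Pi * ρ * Pi) * (T⁻¹ * Pi) = Q * ρ * Q := by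
      rw [hQdef]
      simp only [Matrix.mul_assoc]
    rw [hq1, hq2] at h
    exact h
  -- square root of ρ
  have hρpsd := hρ.posSemidef
  obtain ⟨Sq, hSqpsd, hSS⟩ := psd_sqrt_facts hρpsd
  have hSqh : Sqᴴ = Sq := hSqpsd.1.eq
  have hSqdet : IsUnit Sq.det := by
    refine isUnit_iff_ne_zero.mpr ?_
    intro h0
    have : ρ.det = 0 := by
      rw [← hSS, Matrix.det_mul, h0, mul_zero]
    exact hρ.det_pos.ne' this
  have hSi : Sq * Sq⁻¹ = 1 := Matrix.mul_nonsing_inv _ hSqdet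
  have hiS : Sq⁻¹ * Sq = 1 := Matrix.nonsing_inv_mul _ hSqdet
  have hiSh : (Sq⁻¹)ᴴ = Sq⁻¹ := by
    rw [Matrix.conjTranspose_nonsing_inv, hSqh]
  set B : Matrix (Fin dA × Fin dE) (Fin dA × Fin dE) ℂ := Sq * Q * Sq with hBdef
  have hBpsd : B.PosSemidef := by
    have h := hQpsd.conjTranspose_mul_mul_same Sq
    rwa [hSqh] at h
  have hB2 : ((((c * (S.card : ℝ) : ℝ)) : ℂ) • B - B * B).PosSemidef := by
    have h := hstep5.conjTranspose_mul_mul_same Sq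
    rw [conj_smul_sub, hSqh] at h
    have hq1 : Sq * Q * Sq = B := rfl
    have hq2 : Sq * (Q * ρ * Q) * Sq = B * B := by
      rw [hBdef, ← hSS]
      simp only [Matrix.mul_assoc]
    rw [hq1, hq2] at h
    exact h
  have hbound : ((((c * (S.card : ℝ) : ℝ)) : ℂ) • (1 : Matrix (Fin dA × Fin dE)
      (Fin dA × Fin dE) ℂ) - B).PosSemidef := psd_smul_one_sub hBpsd hk hB2
  -- conjugate back by Sq⁻¹
  have h := hbound.conjTranspose_mul_mul_same Sq⁻¹
  rw [conj_smul_sub, hiSh] at h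
  have hq1 : Sq⁻¹ * (1 : Matrix (Fin dA × Fin dE) (Fin dA × Fin dE) ℂ) * Sq⁻¹ = ρ⁻¹ := by
    rw [Matrix.mul_one, ← Matrix.mul_inv_rev, hSS]
  have hq2 : Sq⁻¹ * B * Sq⁻¹ = Q := by
    rw [hBdef]
    calc Sq⁻¹ * (Sq * Q * Sq) * Sq⁻¹
        = (Sq⁻¹ * Sq) * (Q * (Sq * Sq⁻¹)) := by simp only [Matrix.mul_assoc]
      _ = Q := by rw [hiS, hSi, Matrix.one_mul, Matrix.mul_one]
  rw [hq1, hq2] at h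
  -- identification with the goal
  have hQgoal : Q = projLE (pinchSnd E ρ) ((c : ℂ) • T) * T⁻¹ *
      projLE (pinchSnd E ρ) ((c : ℂ) • T) := rfl
  have hspec : specCount E = S.card := rfl
  rw [hspec]
  exact h


end QD
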